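/- For every n ≥ 2, the refined Motzkin polynomial M_n(u_1,u_2,u_3;v_1,v_2) := Σ_{T∈𝒜_{n+1}} u_1^{sleaf(T)} u_2^{etleaf(T)} u_3^{entleaf(T)} v_1^{yerleaf(T)} v_2^{syleaf(T)} satisfies the symmetry M_n(u_1,u_2,u_3;v_1,v_2) = M_n(u_3,u_2,u_1;v_1,v_2) in ℤ[u_1,u_2,u_3,v_1,v_2]. -/

import Mathlib

/-- Labeled plane trees: a node with a label in `ℕ` and a (left-to-right ordered)
list of children. -/
inductive LTree : Type where
  | node : ℕ → List LTree → LTree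

namespace LTree

/-- The label of the root. -/
def label : LTree → ℕ
  | node a _ => a

/-- The list of children of the root, from left to right. -/
def children : LTree → List LTree
  | node _ cs => cs

/-- A tree consisting of a single node is a leaf. -/
def isLeaf (t : LTree) : Bool := t.children.isEmpty

/-- The list of all subtrees (i.e. all nodes) of a tree. -/
def subtrees : LTree → List LTree
  | node a cs => node a cs :: (cs.attach.map (fun c => subtrees c.1)).flatten
decreasing_by
  simp only [LTree.node.sizeOf_spec]
  have := List.sizeOf_lt_of_mem c.2
  omega

/-- The multiset of labels of all nodes of a tree. -/
def labels (T : LTree) : Multiset ℕ := (T.subtrees.map label : List ℕ)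

/-- `T` is a weakly increasing tree on the multiset `M`: the root is labeled `0`,
the multiset of labels is `M ∪ {0}`, labels weakly increase along root-to-leaf paths,
and the labels of the children of each node weakly increase from right to left. -/
def IsWIT (M : Multiset ℕ) (T : LTree) : Prop :=
  T.label = 0 ∧ T.labels = 0 ::ₘ M ∧
  ∀ t ∈ T.subtrees, (∀ c ∈ t.children, t.label ≤ c.label) ∧
    List.Chain' (fun a b => b ≤ a) (t.children.map label)

/-- `T` is (an encoding of) a plane tree with `n` edges: all labels are zero
and there are `n + 1` nodes. -/
def IsPlane (n : ℕ) (T : LTree) : Prop :=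
  (∀ t ∈ T.subtrees, t.label = 0) ∧ T.subtrees.length = n + 1

/-- The number of singleton leaves: leaves that are the only child of their parent. -/
def sleaf (T : LTree) : ℕ :=
  T.subtrees.countP (fun t => match t.children with
    | [c] => c.isLeaf
    | _ => false)

/-- The number of elder leaves: leaves that are the leftmost child of their parent
and have siblings. -/
def eleaf (T : LTree) : ℕ :=
  T.subtrees.countP (fun t => match t.children with
    | c :: _ :: _ => c.isLeaf
    | _ => false)

/-- The number of young leaves: leaves that are not the leftmost child of their parent. -/
def yleaf (T : LTree) : ℕ :=
  (T.subtrees.map (fun t => t.children.tail.countP isLeaf)).sum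

/-- The number of young internal nodes: internal nodes whose leftmost child is internal. -/
def yint (T : LTree) : ℕ :=
  T.subtrees.countP (fun t => match t.children with
    | c :: _ => !c.isLeaf
    | _ => false)

/-- The number of singleton internal nodes: parents of a singleton leaf. -/
def sint (T : LTree) : ℕ :=
  T.subtrees.countP (fun t => match t.children with
    | [c] => c.isLeaf
    | _ => false)

/-- The number of elder internal nodes: parents of an elder leaf. -/
def eint (T : LTree) : ℕ :=
  T.subtrees.countP (fun t => match t.children with
    | c :: _ :: _ => c.isLeaf
    | _ => false)

/-- The number of old leaves: leaves that are the leftmost child of their parent. -/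
def oleaf (T : LTree) : ℕ := sleaf T + eleaf T

/-- The number of old internal nodes. -/
def oint (T : LTree) : ℕ := sint T + eint T

/-- Whether the root of `t` is the parent of a singleton leaf. -/
def isSingletonParent (t : LTree) : Bool :=
  match t.children with
  | [c] => c.isLeaf
  | _ => false

/-- The number of singleton leaves with uncle: singleton leaves whose parent has an
elder sibling (a sibling to its left). -/
def suleaf (T : LTree) : ℕ :=
  (T.subtrees.map (fun g => g.children.tail.countP isSingletonParent)).sum

/-- The number of singleton leaves with no uncle: singleton leaves whose parent has no
elder sibling (the parent is the root or a leftmost child). -/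
def snuleaf (T : LTree) : ℕ :=
  (if T.isSingletonParent then 1 else 0) +
    (T.subtrees.map (fun g => match g.children with
      | c :: _ => if c.isSingletonParent then 1 else 0
      | [] => 0)).sum

/-- The number of elder twin leaves: elder leaves such that the second child of their
parent is also a leaf. -/
def etleaf (T : LTree) : ℕ :=
  T.subtrees.countP (fun t => match t.children with
    | c :: d :: _ => c.isLeaf && d.isLeaf
    | _ => false)

/-- The number of elder non-twin leaves: elder leaves such that the second child of
their parent is not a leaf. -/
def entleaf (T : LTree) : ℕ :=
  T.subtrees.countP (fun t => match t.children with
    | c :: d :: _ => c.isLeaf && !d.isLeaf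
    | _ => false)

/-- The number of second leaves: young leaves that are the second child of their parent. -/
def syleaf (T : LTree) : ℕ :=
  T.subtrees.countP (fun t => match t.children with
    | _ :: d :: _ => d.isLeaf
    | _ => false)

/-- The number of younger leaves: young leaves that are not the second child of their
parent. -/
def yerleaf (T : LTree) : ℕ :=
  (T.subtrees.map (fun t => (t.children.drop 2).countP isLeaf)).sum

end LTree

set_option linter.dupNamespace false

namespace LTree

lemma subtrees_node (a : ℕ) (cs : List LTree) :
    subtrees (node a cs) = node a cs :: (cs.map subtrees).flatten := by
  rw [subtrees]
  simp [List.attach_map_val]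

lemma countP_subtrees (P : LTree → Bool) (a : ℕ) (cs : List LTree) :
    (subtrees (node a cs)).countP P =
      (if P (node a cs) then 1 else 0) + (cs.map (fun c => (subtrees c).countP P)).sum := by
  rw [subtrees_node, List.countP_cons]
  induction cs with
  | nil => simp [List.countP_nil]
  | cons c l ih =>
    simp only [List.map_cons, List.flatten_cons, List.countP_append, List.sum_cons] at *
    omega

lemma sum_map_subtrees (f : LTree → ℕ) (a : ℕ) (cs : List LTree) :
    ((subtrees (node a cs)).map f).sum =
      f (node a cs) + (cs.map (fun c => ((subtrees c).map f).sum)).sum := by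
  rw [subtrees_node]
  induction cs with
  | nil => simp
  | cons c l ih =>
    simp only [List.map_cons, List.flatten_cons, List.map_append, List.sum_append,
      List.sum_cons, List.map_cons] at *
    omega

def nodes (t : LTree) : ℕ := t.subtrees.length

lemma nodes_node (a : ℕ) (cs : List LTree) :
    nodes (node a cs) = 1 + (cs.map nodes).sum := by
  unfold nodes
  rw [subtrees_node]
  simp [List.length_flatten, Function.comp_def]
  omega

lemma nodes_pos (t : LTree) : 1 ≤ nodes t := by
  obtain ⟨a, cs⟩ := t
  rw [nodes_node]; omega

end LTree
namespace LTree

def leafT : LTree := node 0 []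

lemma isLeaf_leafT : isLeaf leafT = true := rfl

lemma children_node (a : ℕ) (cs : List LTree) : children (node a cs) = cs := rfl

lemma isLeaf_iff (t : LTree) : isLeaf t = true ↔ t.children = [] := by
  simp [isLeaf, List.isEmpty_iff]

lemma sleaf_node (a : ℕ) (cs : List LTree) : sleaf (node a cs) =
    (if isSingletonParent (node a cs) then 1 else 0) + (cs.map sleaf).sum :=
  countP_subtrees _ a cs

lemma etleaf_node (a : ℕ) (cs : List LTree) : etleaf (node a cs) =
    (if (match cs with | c :: d :: _ => c.isLeaf && d.isLeaf | _ => false) then 1 else 0)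
      + (cs.map etleaf).sum :=
  countP_subtrees _ a cs

lemma entleaf_node (a : ℕ) (cs : List LTree) : entleaf (node a cs) =
    (if (match cs with | c :: d :: _ => c.isLeaf && !d.isLeaf | _ => false) then 1 else 0)
      + (cs.map entleaf).sum :=
  countP_subtrees _ a cs

lemma syleaf_node (a : ℕ) (cs : List LTree) : syleaf (node a cs) =
    (if (match cs with | _ :: d :: _ => d.isLeaf | _ => false) then 1 else 0)
      + (cs.map syleaf).sum :=
  countP_subtrees _ a cs

lemma yerleaf_node (a : ℕ) (cs : List LTree) : yerleaf (node a cs) =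
    (cs.drop 2).countP isLeaf + (cs.map yerleaf).sum :=
  sum_map_subtrees _ a cs

section Wt

variable {R : Type*} [CommRing R] (u1 u2 u3 v1 v2 : R)

def wt (t : LTree) : R :=
  u1 ^ sleaf t * u2 ^ etleaf t * u3 ^ entleaf t * v1 ^ yerleaf t * v2 ^ syleaf t

def rwt (t : LTree) : R := if isLeaf t then v1 else wt u1 u2 u3 v1 v2 t

lemma stats_leaf (t : LTree) (h : isLeaf t = true) : sleaf t = 0 ∧ etleaf t = 0 ∧ entleaf t = 0 ∧
    yerleaf t = 0 ∧ syleaf t = 0 := by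
  obtain ⟨a, cs⟩ := t
  rw [isLeaf_iff, children_node] at h
  subst h
  refine ⟨?_, ?_, ?_, ?_, ?_⟩ <;>
    simp [sleaf_node, etleaf_node, entleaf_node, syleaf_node, yerleaf_node, isSingletonParent,
      children_node]

lemma wt_leaf (t : LTree) (h : isLeaf t = true) : wt u1 u2 u3 v1 v2 t = 1 := by
  obtain ⟨h1, h2, h3, h4, h5⟩ := stats_leaf t h
  simp [wt, h1, h2, h3, h4, h5]

lemma wt_leafT : wt u1 u2 u3 v1 v2 leafT = 1 := wt_leaf _ _ _ _ _ _ isLeaf_leafT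

lemma prod_wt_split (l : List LTree) :
    (l.map (wt u1 u2 u3 v1 v2)).prod =
      (l.map fun c => u1 ^ sleaf c).prod * (l.map fun c => u2 ^ etleaf c).prod *
      (l.map fun c => u3 ^ entleaf c).prod * (l.map fun c => v1 ^ yerleaf c).prod *
      (l.map fun c => v2 ^ syleaf c).prod := by
  induction l with
  | nil => simp
  | cons d l ih => simp only [List.map_cons, List.prod_cons, ih, wt]; ring

lemma pow_list_sum (u : R) (l : List LTree) (f : LTree → ℕ) :
    u ^ (l.map f).sum = (l.map fun c => u ^ f c).prod := by
  induction l with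
  | nil => simp
  | cons c l ih => simp [pow_add, ih]

lemma wt_node (a : ℕ) (cs : List LTree) :
    wt u1 u2 u3 v1 v2 (node a cs) =
      (if isSingletonParent (node a cs) then u1 else 1) *
      (if (match cs with | c :: d :: _ => c.isLeaf && d.isLeaf | _ => false) then u2 else 1) *
      (if (match cs with | c :: d :: _ => c.isLeaf && !d.isLeaf | _ => false) then u3 else 1) *
      v1 ^ ((cs.drop 2).countP isLeaf) *
      (if (match cs with | _ :: d :: _ => d.isLeaf | _ => false) then v2 else 1) *
      (cs.map (wt u1 u2 u3 v1 v2)).prod := by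
  rw [wt, sleaf_node, etleaf_node, entleaf_node, syleaf_node, yerleaf_node]
  simp only [pow_add, pow_list_sum, prod_wt_split]
  rw [pow_ite, pow_ite, pow_ite, pow_ite, pow_one, pow_zero, pow_one, pow_zero,
    pow_one, pow_zero, pow_one, pow_zero]
  ring

lemma pow_countP (l : List LTree) :
    v1 ^ (l.countP isLeaf) = (l.map fun c => if isLeaf c then v1 else 1).prod := by
  induction l with
  | nil => simp
  | cons d l ih =>
    rw [List.countP_cons, List.map_cons, List.prod_cons, pow_add, ← ih]
    by_cases h : isLeaf d <;> simp [h] <;> ring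

lemma prod_rwt (l : List LTree) :
    (l.map fun c => if isLeaf c then v1 else 1).prod * (l.map (wt u1 u2 u3 v1 v2)).prod =
      (l.map (rwt u1 u2 u3 v1 v2)).prod := by
  induction l with
  | nil => simp
  | cons d l ih =>
    simp only [List.map_cons, List.prod_cons]
    rw [← ih]
    by_cases h : isLeaf d
    · rw [rwt, if_pos h, wt_leaf _ _ _ _ _ _ h, if_pos h]; ring
    · rw [rwt, if_neg h, if_neg h]; ring

lemma wt_singleton (a : ℕ) : wt u1 u2 u3 v1 v2 (node a [leafT]) = u1 := by
  rw [wt_node]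
  rw [show isSingletonParent (node a [leafT]) = true from rfl]
  simp [wt_leafT]

lemma wt_cons (a : ℕ) (t : LTree) (rest : List LTree) :
    wt u1 u2 u3 v1 v2 (node a (leafT :: t :: rest)) =
      (if isLeaf t then u2 * v2 else u3 * wt u1 u2 u3 v1 v2 t) *
        (rest.map (rwt u1 u2 u3 v1 v2)).prod := by
  rw [wt_node]
  rw [show isSingletonParent (node a (leafT :: t :: rest)) = false from rfl]
  rw [show (match leafT :: t :: rest with
        | c :: d :: _ => c.isLeaf && d.isLeaf | _ => false) = t.isLeaf from by
      show (leafT.isLeaf && t.isLeaf) = t.isLeaf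
      rw [isLeaf_leafT, Bool.true_and]]
  rw [show (match leafT :: t :: rest with
        | c :: d :: _ => c.isLeaf && !d.isLeaf | _ => false) = !t.isLeaf from by
      show (leafT.isLeaf && !t.isLeaf) = !t.isLeaf
      rw [isLeaf_leafT, Bool.true_and]]
  rw [show (match leafT :: t :: rest with
        | _ :: d :: _ => d.isLeaf | _ => false) = t.isLeaf from rfl]
  rw [show (leafT :: t :: rest).drop 2 = rest from rfl]
  rw [List.map_cons, List.map_cons, List.prod_cons, List.prod_cons, wt_leafT,
    pow_countP, one_mul]
  rw [← prod_rwt]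
  by_cases h : isLeaf t
  · simp only [h, if_true, Bool.not_true, Bool.false_eq_true, if_false,
      wt_leaf u1 u2 u3 v1 v2 t h]
    ring
  · simp only [Bool.not_eq_true] at h
    simp only [h, Bool.not_false, if_true, Bool.false_eq_true, if_false]
    ring

end Wt

end LTree
namespace LTree

noncomputable instance : DecidableEq LTree := Classical.decEq _

lemma yint_node (a : ℕ) (cs : List LTree) : yint (node a cs) =
    (if (match cs with | c :: _ => !c.isLeaf | _ => false) then 1 else 0)
      + (cs.map yint).sum :=
  countP_subtrees _ a cs

lemma subtrees_leafT : subtrees leafT = [leafT] := by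
  rw [leafT, subtrees_node]; simp

lemma nodes_leafT : nodes leafT = 1 := by rw [nodes, subtrees_leafT]; rfl

lemma mem_subtrees_self (t : LTree) : t ∈ t.subtrees := by
  obtain ⟨a, cs⟩ := t
  rw [subtrees_node]
  exact List.mem_cons_self

lemma mem_subtrees_of_child {a : ℕ} {cs : List LTree} {c s : LTree} (hc : c ∈ cs)
    (hs : s ∈ subtrees c) : s ∈ subtrees (node a cs) := by
  rw [subtrees_node]
  exact List.mem_cons_of_mem _ (List.mem_flatten.2 ⟨subtrees c, List.mem_map_of_mem hc, hs⟩)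

/-- Good trees: all labels zero, no young internal node. -/
def Good (t : LTree) : Prop := (∀ s ∈ t.subtrees, s.label = 0) ∧ yint t = 0

lemma good_leafT : Good leafT := by
  constructor
  · rw [subtrees_leafT]
    rintro s hs
    simp at hs
    subst hs
    rfl
  · rw [leafT, yint_node]
    simp

lemma yint_leafT : yint leafT = 0 := good_leafT.2

lemma good_build {l : List LTree} (hl : ∀ c ∈ l, Good c) : Good (node 0 (leafT :: l)) := by
  constructor
  · intro s hs
    rw [subtrees_node] at hs
    rcases List.mem_cons.1 hs with h | h
    · subst h; rfl
    · rcases List.mem_flatten.1 h with ⟨L, hL, hsL⟩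
      rcases List.mem_map.1 hL with ⟨c, hc, rfl⟩
      rcases List.mem_cons.1 hc with rfl | hc'
      · rw [subtrees_leafT] at hsL
        simp at hsL
        subst hsL; rfl
      · exact (hl c hc').1 s hsL
  · rw [yint_node]
    rw [show (match leafT :: l with | c :: _ => !c.isLeaf | _ => false) = false from rfl]
    simp only [Bool.false_eq_true, if_false, List.map_cons, List.sum_cons, yint_leafT,
      zero_add]
    refine Nat.eq_zero_of_le_zero (le_of_eq ?_)
    apply List.sum_eq_zero
    intro x hx
    rcases List.mem_map.1 hx with ⟨c, hc, rfl⟩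
    exact (hl c hc).2

lemma good_destruct {a : ℕ} {c : LTree} {l : List LTree} (h : Good (node a (c :: l))) :
    a = 0 ∧ c = leafT ∧ ∀ d ∈ l, Good d := by
  obtain ⟨hlab, hyint⟩ := h
  have ha : a = 0 := hlab _ (mem_subtrees_self _)
  have hsum : ((c :: l).map yint).sum = 0 ∧
      (if (match c :: l with | c :: _ => !c.isLeaf | _ => false) then 1 else 0) = 0 := by
    rw [yint_node] at hyint
    omega
  have hcleaf : isLeaf c = true := by
    have := hsum.2
    by_cases h : isLeaf c
    · exact h
    · exfalso
      rw [show (match c :: l with | c :: _ => !c.isLeaf | _ => false) = !c.isLeaf from rfl] at this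
      simp [h] at this
  have hclabel : c.label = 0 := hlab _ (mem_subtrees_of_child (List.mem_cons_self)
    (mem_subtrees_self c))
  have hcleafT : c = leafT := by
    obtain ⟨b, cs'⟩ := c
    rw [isLeaf_iff, children_node] at hcleaf
    subst hcleaf
    have : b = 0 := hclabel
    subst this; rfl
  refine ⟨ha, hcleafT, fun d hd => ⟨fun s hs => hlab s
    (mem_subtrees_of_child (List.mem_cons_of_mem _ hd) hs), ?_⟩⟩
  have h0 : ((c :: l).map yint).sum = 0 := hsum.1
  simp only [List.map_cons, List.sum_cons] at h0
  have := List.sum_eq_zero_iff.1 (by omega : (l.map yint).sum = 0)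
  exact this _ (List.mem_map_of_mem hd)

/-- Finsets of lists of good (tip-augmented) trees with given total number of nodes. -/
noncomputable def TAL : ℕ → Finset (List LTree)
  | 0 => {[]}
  | (m+1) =>
    (Finset.range (m+1)).attach.biUnion fun j =>
      (((if m + 1 - j.1 = 1 then {leafT} else
          (TAL (m - 1 - j.1)).image fun l => node 0 (leafT :: l)) ×ˢ TAL j.1).image
        fun p => p.1 :: p.2)
decreasing_by
  · omega
  · have := Finset.mem_range.1 j.2; omega

/-- Finsets of good (tip-augmented) trees with given number of nodes. -/
noncomputable def TA : ℕ → Finset LTree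
  | 0 => ∅
  | 1 => {leafT}
  | (s+2) => (TAL s).image fun l => node 0 (leafT :: l)

lemma TAL_succ (m : ℕ) : TAL (m+1) =
    (Finset.range (m+1)).attach.biUnion fun j =>
      ((TA (m + 1 - j.1) ×ˢ TAL j.1).image fun p => p.1 :: p.2) := by
  rw [TAL]
  apply Finset.biUnion_congr rfl
  intro j _
  congr 1
  have hj : j.1 < m + 1 := Finset.mem_range.1 j.2
  congr 1
  rcases Nat.lt_or_ge (m + 1 - j.1) 2 with h | h
  · have h1 : m + 1 - j.1 = 1 := by omega
    rw [h1, if_pos rfl]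
    rfl
  · obtain ⟨s, hs⟩ : ∃ s, m + 1 - j.1 = s + 2 := ⟨m + 1 - j.1 - 2, by omega⟩
    rw [hs, if_neg (by omega)]
    have : m - 1 - j.1 = s := by omega
    rw [this]
    rfl

lemma mem_TAL_succ {m : ℕ} {l : List LTree} : l ∈ TAL (m+1) ↔
    ∃ j < m + 1, ∃ t ∈ TA (m + 1 - j), ∃ l' ∈ TAL j, l = t :: l' := by
  rw [TAL_succ]
  simp only [Finset.mem_biUnion, Finset.mem_attach, Finset.mem_image, Finset.mem_product,
    true_and]
  constructor
  · rintro ⟨j, ⟨⟨t, l'⟩, ⟨ht, hl'⟩, rfl⟩⟩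
    exact ⟨j.1, Finset.mem_range.1 j.2, t, ht, l', hl', rfl⟩
  · rintro ⟨j, hj, t, ht, l', hl', rfl⟩
    exact ⟨⟨j, Finset.mem_range.2 hj⟩, ⟨(t, l'), ⟨ht, hl'⟩, rfl⟩⟩

/-- Characterization of `TAL` and `TA`. -/
lemma TAL_TA_char (k : ℕ) :
    (∀ l : List LTree, l ∈ TAL k ↔ ((∀ c ∈ l, Good c) ∧ (l.map nodes).sum = k)) ∧
    (∀ t : LTree, t ∈ TA k ↔ (Good t ∧ nodes t = k)) := by
  induction k using Nat.strong_induction_on with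
  | _ k IH =>
  have treepart : ∀ t : LTree, t ∈ TA k ↔ (Good t ∧ nodes t = k) := by
    intro t
    match k with
    | 0 =>
      simp only [TA, Finset.notMem_empty, false_iff]
      rintro ⟨-, h⟩
      have := nodes_pos t
      omega
    | 1 =>
      simp only [TA, Finset.mem_singleton]
      constructor
      · rintro rfl
        exact ⟨good_leafT, nodes_leafT⟩
      · rintro ⟨hg, hn⟩
        obtain ⟨a, cs⟩ := t
        have ha : a = 0 := hg.1 _ (mem_subtrees_self _)
        subst ha
        rw [nodes_node] at hn
        match cs with
        | [] => rfl
        | c :: l =>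
          exfalso
          simp only [List.map_cons, List.sum_cons] at hn
          have := nodes_pos c
          omega
    | (s+2) =>
      rw [TA]
      simp only [Finset.mem_image]
      constructor
      · rintro ⟨l, hl, rfl⟩
        have hchar := (IH s (by omega)).1 l
        obtain ⟨hgood, htot⟩ := hchar.1 hl
        refine ⟨good_build hgood, ?_⟩
        rw [nodes_node]
        simp only [List.map_cons, List.sum_cons, nodes_leafT]
        omega
      · rintro ⟨hg, hn⟩
        obtain ⟨a, cs⟩ := t
        match cs with
        | [] =>
          exfalso
          rw [nodes_node] at hn
          simp at hn
        | c :: l =>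
          obtain ⟨ha, hc, hl⟩ := good_destruct hg
          subst ha; subst hc
          refine ⟨l, ?_, rfl⟩
          rw [(IH s (by omega)).1 l]
          refine ⟨hl, ?_⟩
          rw [nodes_node] at hn
          simp only [List.map_cons, List.sum_cons, nodes_leafT] at hn
          omega
  refine ⟨?_, treepart⟩
  intro l
  match k with
  | 0 =>
    rw [TAL]
    simp only [Finset.mem_singleton]
    constructor
    · rintro rfl; simp
    · rintro ⟨-, htot⟩
      match l with
      | [] => rfl
      | c :: l' =>
        exfalso
        simp only [List.map_cons, List.sum_cons] at htot
        have := nodes_pos c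
        omega
  | (m+1) =>
    have treeChar : ∀ s ≤ m + 1, ∀ t : LTree, t ∈ TA s ↔ (Good t ∧ nodes t = s) := by
      intro s hs t
      rcases Nat.lt_or_ge s (m+1) with h | h
      · exact (IH s h).2 t
      · have : s = m + 1 := by omega
        subst this
        exact treepart t
    rw [mem_TAL_succ]
    constructor
    · rintro ⟨j, hj, t, ht, l', hl', rfl⟩
      obtain ⟨hg, hn⟩ := (treeChar _ (by omega) t).1 ht
      obtain ⟨hgood, htot⟩ := ((IH j hj).1 l').1 hl'
      refine ⟨?_, ?_⟩
      · rintro c hc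
        rcases List.mem_cons.1 hc with rfl | hc'
        · exact hg
        · exact hgood c hc'
      · simp only [List.map_cons, List.sum_cons]
        have := nodes_pos t
        omega
    · rintro ⟨hgood, htot⟩
      match l with
      | [] => simp at htot
      | t :: l' =>
        simp only [List.map_cons, List.sum_cons] at htot
        have hpos := nodes_pos t
        refine ⟨(l'.map nodes).sum, by omega, t, ?_, l', ?_, rfl⟩
        · have he : m + 1 - (l'.map nodes).sum = nodes t := by omega
          rw [he, treeChar (nodes t) (by omega) t]
          exact ⟨hgood t (List.mem_cons_self), rfl⟩
        · rw [(IH ((l'.map nodes).sum) (by omega)).1 l']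
          exact ⟨fun c hc => hgood c (List.mem_cons_of_mem _ hc), rfl⟩

lemma mem_TA {m : ℕ} {t : LTree} : t ∈ TA m ↔ (Good t ∧ nodes t = m) :=
  (TAL_TA_char m).2 t

lemma mem_TAL {k : ℕ} {l : List LTree} :
    l ∈ TAL k ↔ ((∀ c ∈ l, Good c) ∧ (l.map nodes).sum = k) :=
  (TAL_TA_char k).1 l

end LTree
namespace LTree

section Sums

variable {R : Type*} [CommRing R] (u1 u2 u3 v1 v2 : R)

noncomputable def Ssum (m : ℕ) : R := ∑ t ∈ TA m, wt u1 u2 u3 v1 v2 t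

noncomputable def Lsum (k : ℕ) : R := ∑ l ∈ TAL k, (l.map (rwt u1 u2 u3 v1 v2)).prod

lemma Ssum_zero : Ssum u1 u2 u3 v1 v2 0 = 0 := by simp [Ssum, TA]

lemma Ssum_one : Ssum u1 u2 u3 v1 v2 1 = 1 := by simp [Ssum, TA, wt_leafT]

lemma TAL_zero : TAL 0 = {[]} := by rw [TAL]

lemma Ssum_two : Ssum u1 u2 u3 v1 v2 2 = u1 := by
  show ∑ t ∈ TA 2, wt u1 u2 u3 v1 v2 t = u1
  rw [show (2 : ℕ) = 0 + 2 from rfl, TA, TAL_zero]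
  simp [wt_singleton]

lemma Lsum_zero : Lsum u1 u2 u3 v1 v2 0 = 1 := by simp [Lsum, TAL_zero]

lemma not_isLeaf_mem_TA {s : ℕ} {t : LTree} (hs : s ≠ 1) (ht : t ∈ TA s) :
    ∃ l ∈ TAL (s - 2), t = node 0 (leafT :: l) := by
  match s, hs with
  | 0, _ => simp [TA] at ht
  | (s'+2), _ =>
    rw [TA] at ht
    simp only [Finset.mem_image] at ht
    obtain ⟨l, hl, rfl⟩ := ht
    exact ⟨l, hl, rfl⟩

lemma sum_TAL_succ (m : ℕ) (F : List LTree → R) :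
    ∑ l ∈ TAL (m+1), F l =
      ∑ j ∈ Finset.range (m+1), ∑ t ∈ TA (m+1-j), ∑ l ∈ TAL j, F (t :: l) := by
  rw [TAL_succ]
  rw [Finset.sum_biUnion]
  · rw [← Finset.sum_attach (Finset.range (m+1))
      (fun j => ∑ t ∈ TA (m+1-j), ∑ l ∈ TAL j, F (t :: l))]
    apply Finset.sum_congr rfl
    intro j _
    rw [Finset.sum_image]
    · rw [Finset.sum_product]
    · rintro ⟨t, l⟩ - ⟨t', l'⟩ - h
      simpa using h
  · rintro j - j' - hjj'
    simp only [Finset.disjoint_left]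
    rintro x hx hx'
    simp only [Finset.mem_image, Finset.mem_product] at hx hx'
    obtain ⟨⟨t, l⟩, ⟨-, hl⟩, rfl⟩ := hx
    obtain ⟨⟨t', l'⟩, ⟨-, hl'⟩, h⟩ := hx'
    have hll' : l' = l := (List.cons.injEq _ _ _ _ ▸ h).2
    subst hll'
    have e1 := (mem_TAL.1 hl).2
    have e2 := (mem_TAL.1 hl').2
    exact hjj' (Subtype.ext (e1 ▸ e2))

lemma rsum_eq (s : ℕ) : ∑ t ∈ TA s, rwt u1 u2 u3 v1 v2 t =
    if s = 1 then v1 else Ssum u1 u2 u3 v1 v2 s := by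
  by_cases hs : s = 1
  · subst hs
    rw [if_pos rfl]
    show ∑ t ∈ TA 1, _ = _
    rw [TA]
    simp [rwt, isLeaf_leafT]
  · rw [if_neg hs, Ssum]
    apply Finset.sum_congr rfl
    intro t ht
    obtain ⟨l, -, rfl⟩ := not_isLeaf_mem_TA hs ht
    rw [rwt, if_neg (by simp [isLeaf, children_node])]

lemma hsum_eq (s : ℕ) : ∑ t ∈ TA s,
      (if isLeaf t then u2 * v2 else u3 * wt u1 u2 u3 v1 v2 t) =
    if s = 1 then u2 * v2 else u3 * Ssum u1 u2 u3 v1 v2 s := by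
  by_cases hs : s = 1
  · subst hs
    rw [if_pos rfl]
    show ∑ t ∈ TA 1, _ = _
    rw [TA]
    simp [isLeaf_leafT]
  · rw [if_neg hs, Ssum, Finset.mul_sum]
    apply Finset.sum_congr rfl
    intro t ht
    obtain ⟨l, -, rfl⟩ := not_isLeaf_mem_TA hs ht
    rw [if_neg (by simp [isLeaf, children_node])]

lemma Lsum_succ (k : ℕ) : Lsum u1 u2 u3 v1 v2 (k+1) =
    ∑ j ∈ Finset.range (k+1),
      (if k + 1 - j = 1 then v1 else Ssum u1 u2 u3 v1 v2 (k+1-j)) * Lsum u1 u2 u3 v1 v2 j := by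
  rw [Lsum, sum_TAL_succ]
  apply Finset.sum_congr rfl
  intro j _
  rw [← rsum_eq, Finset.sum_mul]
  apply Finset.sum_congr rfl
  intro t _
  rw [Lsum, Finset.mul_sum]
  apply Finset.sum_congr rfl
  intro l _
  simp [mul_comm]

lemma Ssum_succ (k : ℕ) : Ssum u1 u2 u3 v1 v2 (k+3) =
    ∑ j ∈ Finset.range (k+1),
      (if k + 1 - j = 1 then u2 * v2 else u3 * Ssum u1 u2 u3 v1 v2 (k+1-j)) *
        Lsum u1 u2 u3 v1 v2 j := by
  have h1 : Ssum u1 u2 u3 v1 v2 (k+3) =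
      ∑ l ∈ TAL (k+1), wt u1 u2 u3 v1 v2 (node 0 (leafT :: l)) := by
    rw [Ssum, show k + 3 = (k+1) + 2 from rfl, TA, Finset.sum_image]
    rintro l - l' - h
    simpa using h
  rw [h1, sum_TAL_succ]
  apply Finset.sum_congr rfl
  intro j _
  rw [← hsum_eq, Finset.sum_mul]
  apply Finset.sum_congr rfl
  intro t _
  rw [Lsum, Finset.mul_sum]
  apply Finset.sum_congr rfl
  intro l _
  rw [wt_cons]

end Sums

end LTree
namespace LTree

section PS

open PowerSeries

variable {R : Type*} [CommRing R] (u1 u2 u3 v1 v2 : R)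

noncomputable def Sser : PowerSeries R := PowerSeries.mk (Ssum u1 u2 u3 v1 v2)

noncomputable def Lser : PowerSeries R := PowerSeries.mk (Lsum u1 u2 u3 v1 v2)

lemma sum_swap_idx (n : ℕ) (f g : ℕ → R) (h : ∀ j < n, f j = g (n - 1 - j)) :
    ∑ j ∈ Finset.range n, f j = ∑ j ∈ Finset.range n, g j := by
  rw [← Finset.sum_range_reflect g n]
  exact Finset.sum_congr rfl (fun j hj => h j (Finset.mem_range.1 hj))

lemma coeff_Rser (i : ℕ) :
    (PowerSeries.coeff i) (Sser u1 u2 u3 v1 v2 + (C v1 - 1) * X) =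
      (if i = 1 then v1 else Ssum u1 u2 u3 v1 v2 i) := by
  rw [map_add, Sser, coeff_mk, sub_mul, one_mul, map_sub, coeff_C_mul, coeff_X]
  by_cases h : i = 1
  · subst h
    simp [Ssum_one]
  · simp [h]

lemma coeff_Hser (i : ℕ) :
    (PowerSeries.coeff i) (C u3 * PowerSeries.mk (Ssum u1 u2 u3 v1 v2) +
        (C u2 * C v2 - C u3) * X) =
      (if i = 1 then u2 * v2 else u3 * Ssum u1 u2 u3 v1 v2 i) := by
  rw [map_add, coeff_C_mul, coeff_mk, sub_mul, map_sub, coeff_C_mul, ← map_mul,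
    coeff_C_mul, coeff_X]
  by_cases h : i = 1
  · subst h
    simp [Ssum_one]
  · simp [h]

lemma Lser_eq : Lser u1 u2 u3 v1 v2 =
    1 + (Sser u1 u2 u3 v1 v2 + (C v1 - 1) * X) * Lser u1 u2 u3 v1 v2 := by
  ext n
  rw [map_add, PowerSeries.coeff_mul]
  match n with
  | 0 =>
    simp only [Finset.Nat.antidiagonal_zero, Finset.sum_singleton, coeff_Rser, coeff_zero_one]
    rw [Lser, coeff_mk, Lsum_zero]
    simp [Ssum_zero]
  | (k+1) =>
    rw [Lser, coeff_mk, coeff_one, if_neg (Nat.succ_ne_zero k),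
      Finset.Nat.sum_antidiagonal_eq_sum_range_succ_mk, Finset.sum_range_succ']
    simp only [coeff_Rser, coeff_mk]
    rw [show (if (0:ℕ) = 1 then v1 else Ssum u1 u2 u3 v1 v2 0) = 0 from by simp [Ssum_zero]]
    rw [zero_mul, add_zero, zero_add, Lsum_succ]
    apply sum_swap_idx
    intro j hj
    have e0 : k + 1 - 1 - j = k - j := rfl
    rw [e0]
    have e1 : k - j + 1 = k + 1 - j := by omega
    rw [e1]
    have e2 : k + 1 - (k + 1 - j) = j := by omega
    rw [e2]

lemma Sser_eq : Sser u1 u2 u3 v1 v2 =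
    X + C u1 * X ^ 2 +
      ((C u3 * Sser u1 u2 u3 v1 v2 + (C u2 * C v2 - C u3) * X) *
        Lser u1 u2 u3 v1 v2) * X ^ 2 := by
  ext n
  rw [map_add, map_add, coeff_X, coeff_C_mul, coeff_X_pow, coeff_mul_X_pow',
    PowerSeries.coeff_mul]
  match n with
  | 0 => simp [Sser, coeff_mk, Ssum_zero]
  | 1 => simp [Sser, coeff_mk, Ssum_one]
  | 2 =>
    rw [Sser, coeff_mk, Ssum_two]
    rw [if_neg (by norm_num : ¬ (2:ℕ) = 1), if_pos rfl, if_pos (by norm_num : 2 ≤ 2)]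
    rw [show (2:ℕ) - 2 = 0 from rfl]
    simp only [Finset.Nat.antidiagonal_zero, Finset.sum_singleton, coeff_Hser]
    rw [Lser, coeff_mk, Lsum_zero]
    simp [Ssum_zero]
  | (k+3) =>
    rw [Sser, coeff_mk]
    rw [if_neg (by omega), if_neg (by omega), if_pos (by omega)]
    rw [show k + 3 - 2 = k + 1 from rfl]
    rw [Finset.Nat.sum_antidiagonal_eq_sum_range_succ_mk, Finset.sum_range_succ']
    simp only [coeff_Hser, coeff_mk]
    rw [show (if (0:ℕ) = 1 then u2 * v2 else u3 * Ssum u1 u2 u3 v1 v2 0) = 0 from by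
      simp [Ssum_zero]]
    rw [zero_mul, add_zero, zero_add, mul_zero, zero_add, Lser]
    simp only [coeff_mk]
    rw [Ssum_succ]
    apply sum_swap_idx
    intro j hj
    have e0 : k + 1 - 1 - j = k - j := rfl
    rw [e0]
    have e1 : k - j + 1 = k + 1 - j := by omega
    rw [e1]
    have e2 : k + 1 - (k + 1 - j) = j := by omega
    rw [e2]

lemma Sser_symm_ps :
    Sser u1 u2 u3 v1 v2 - Sser u3 u2 u1 v1 v2 = (C u1 - C u3) * X ^ 2 := by
  set S := Sser u1 u2 u3 v1 v2 with hSdef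
  set S' := Sser u3 u2 u1 v1 v2 with hS'def
  set L := Lser u1 u2 u3 v1 v2 with hLdef
  set L' := Lser u3 u2 u1 v1 v2 with hL'def
  have e1 : L * (1 - S - (C v1 - 1) * X) = 1 := by
    have h := Lser_eq u1 u2 u3 v1 v2
    rw [← hSdef, ← hLdef] at h
    linear_combination h
  have e1' : L' * (1 - S' - (C v1 - 1) * X) = 1 := by
    have h := Lser_eq u3 u2 u1 v1 v2
    rw [← hS'def, ← hL'def] at h
    linear_combination h
  have hS : S = X + C u1 * X ^ 2 +
      ((C u3 * S + (C u2 * C v2 - C u3) * X) * L) * X ^ 2 := by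
    have h := Sser_eq u1 u2 u3 v1 v2
    rw [← hSdef, ← hLdef] at h
    exact h
  have hS' : S' = X + C u3 * X ^ 2 +
      ((C u1 * S' + (C u2 * C v2 - C u1) * X) * L') * X ^ 2 := by
    have h := Sser_eq u3 u2 u1 v1 v2
    rw [← hS'def, ← hL'def] at h
    exact h
  have hU : IsUnit (1 + (2 - C v1) * X - S - S' : PowerSeries R) := by
    rw [PowerSeries.isUnit_iff_constantCoeff]
    have c1 : constantCoeff S = 0 := by
      rw [hSdef, Sser, ← coeff_zero_eq_constantCoeff_apply, coeff_mk, Ssum_zero]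
    have c2 : constantCoeff S' = 0 := by
      rw [hS'def, Sser, ← coeff_zero_eq_constantCoeff_apply, coeff_mk, Ssum_zero]
    simp [c1, c2]
  have key : (S - S' - (C u1 - C u3) * X ^ 2) *
      (1 + (2 - C v1) * X - S - S') = 0 := by
    linear_combination (1 - S - (C v1 - 1) * X) * hS -
      (1 - S' - (C v1 - 1) * X) * hS' +
      (C u3 * S + (C u2 * C v2 - C u3) * X) * X ^ 2 * e1 -
      (C u1 * S' + (C u2 * C v2 - C u1) * X) * X ^ 2 * e1'
  have := (IsUnit.mul_left_eq_zero hU).1 key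
  linear_combination this
  
end PS

end LTree
namespace LTree

lemma Ssum_symm {R : Type*} [CommRing R] (u1 u2 u3 v1 v2 : R) (m : ℕ) (hm : 3 ≤ m) :
    Ssum u1 u2 u3 v1 v2 m = Ssum u3 u2 u1 v1 v2 m := by
  have h := congrArg (PowerSeries.coeff m) (Sser_symm_ps u1 u2 u3 v1 v2)
  rw [map_sub, Sser, Sser, PowerSeries.coeff_mk, PowerSeries.coeff_mk, sub_mul, map_sub,
    PowerSeries.coeff_C_mul, PowerSeries.coeff_C_mul, PowerSeries.coeff_X_pow,
    if_neg (by omega : ¬ m = 2)] at h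
  simp only [mul_zero, sub_zero, sub_self] at h
  exact sub_eq_zero.1 h

end LTree



open MvPolynomial in
/-- **Theorem (symmetry of the refined Motzkin polynomial).**  For `n ≥ 2`,
`M_n(u₁,u₂,u₃;v₁,v₂) = M_n(u₃,u₂,u₁;v₁,v₂)` where
`M_n(u₁,u₂,u₃;v₁,v₂) = Σ_{T ∈ 𝒜_{n+1}} u₁^{sleaf} u₂^{etleaf} u₃^{entleaf} v₁^{yerleaf} v₂^{syleaf}`.
Here `u₁ = X 0`, `u₂ = X 1`, `u₃ = X 2`, `v₁ = X 3`, `v₂ = X 4`. -/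
theorem refined_motzkin_symmetry
    (n : ℕ) (hn : 2 ≤ n) (An : Finset LTree)
    (hAn : ∀ T, T ∈ An ↔ (LTree.IsPlane (n + 1) T ∧ LTree.yint T = 0)) :
    ∑ T ∈ An,
        (X 0 : MvPolynomial (Fin 5) ℤ) ^ LTree.sleaf T * X 1 ^ LTree.etleaf T *
          X 2 ^ LTree.entleaf T * X 3 ^ LTree.yerleaf T * X 4 ^ LTree.syleaf T
      = ∑ T ∈ An,
          (X 2 : MvPolynomial (Fin 5) ℤ) ^ LTree.sleaf T * X 1 ^ LTree.etleaf T *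
            X 0 ^ LTree.entleaf T * X 3 ^ LTree.yerleaf T * X 4 ^ LTree.syleaf T := by
  have hset : An = LTree.TA (n+2) := by
    ext T
    rw [hAn T, LTree.mem_TA]
    constructor
    · rintro ⟨⟨h1, h2⟩, h3⟩
      exact ⟨⟨h1, h3⟩, h2⟩
    · rintro ⟨⟨h1, h3⟩, h2⟩
      exact ⟨⟨h1, h2⟩, h3⟩
  rw [hset]
  exact LTree.Ssum_symm (X 0) (X 1) (X 2) (X 3) (X 4) (n+2) (by omega)
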